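/- Let d ≥ 1 be an integer, let γ₁,…,γ_d, b, β be complex numbers with b ≠ 0 and β ≠ 0, and let A ∈ ℂ satisfy 1 + b·exp(β·A) = 0. Let U ⊆ ℂ^d be an open neighborhood of 0 and let ψ : ℂ^d → ℂ be analytic on U with ψ(0) = A, such that 1 + b·exp(β·ψ(a)) + Σ_{i=1}^d a_i·exp(γ_i·ψ(a)) = 0 for all a = (a₁,…,a_d) ∈ U, and set φ(a) = exp(ψ(a)) with α := exp(A). Let I = (I(1),…,I(N)) be an ordered multiset, i.e. a tuple of indices in {1,…,d}, with N = |I| ≥ 1, and let ∂(φ,I) denote the iterated partial derivative (∂/∂a_{I(1)})⋯(∂/∂a_{I(N)}) φ evaluated at a = 0. Then ∂(φ,I) = −( exp(A·(1 + Σ_{h=1}^N (γ_{I(h)} − 1))) / g'(α)^{N} ) · (−β)^{N−1} · ( β^{−1} − 1 + β^{−1}·Σ_{h=1}^N γ_{I(h)} )_{N−1}, where g'(α) = b·β·exp(A·(β−1)). -/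

import Mathlib

/-- The partial derivative of `f : (Fin d → ℂ) → ℂ` in the `i`-th coordinate direction. -/
noncomputable def pd {d : ℕ} (i : Fin d) (f : (Fin d → ℂ) → ℂ) : (Fin d → ℂ) → ℂ :=
  fun x => fderiv ℂ f x (Pi.single i 1)

/-- The iterated partial derivative `(∂/∂a_{I 0}) ⋯ (∂/∂a_{I (N-1)}) f` along the
ordered multiset (tuple) `I`. -/
noncomputable def iterPDList {d N : ℕ} (I : Fin N → Fin d) (f : (Fin d → ℂ) → ℂ) :
    (Fin d → ℂ) → ℂ :=
  (List.ofFn I).foldr (fun i g => pd i g) f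

/-- The falling factorial `(p)_k = ∏_{i=1}^k (p - i + 1)` of a complex number. -/
noncomputable def fallC (p : ℂ) (k : ℕ) : ℂ :=
  ∏ i ∈ Finset.range k, (p - (i : ℂ))

open Complex


open Complex

noncomputable def iterPD {d : ℕ} (l : List (Fin d)) (f : (Fin d → ℂ) → ℂ) :
    (Fin d → ℂ) → ℂ :=
  l.foldr (fun i g => pd i g) f

@[simp] lemma iterPD_nil {d : ℕ} (f : (Fin d → ℂ) → ℂ) : iterPD [] f = f := rfl

@[simp] lemma iterPD_cons {d : ℕ} (k : Fin d) (l : List (Fin d)) (f : (Fin d → ℂ) → ℂ) :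
    iterPD (k :: l) f = pd k (iterPD l f) := rfl

lemma iterPD_append_singleton {d : ℕ} (l : List (Fin d)) (k : Fin d) (f : (Fin d → ℂ) → ℂ) :
    iterPD (l ++ [k]) f = iterPD l (pd k f) := by
  unfold iterPD
  rw [List.foldr_append]
  rfl

lemma pd_congr {d : ℕ} {V : Set (Fin d → ℂ)} (hV : IsOpen V)
    {f g : (Fin d → ℂ) → ℂ} (hfg : ∀ y ∈ V, f y = g y) {x : Fin d → ℂ} (hx : x ∈ V)
    (i : Fin d) : pd i f x = pd i g x := by
  unfold pd
  rw [Filter.EventuallyEq.fderiv_eq (Filter.eventuallyEq_of_mem (hV.mem_nhds hx) hfg)]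

lemma iterPD_congr {d : ℕ} {V : Set (Fin d → ℂ)} (hV : IsOpen V)
    {f g : (Fin d → ℂ) → ℂ} (hfg : ∀ y ∈ V, f y = g y) (l : List (Fin d)) :
    ∀ x ∈ V, iterPD l f x = iterPD l g x := by
  induction l with
  | nil => exact hfg
  | cons k l IH =>
    intro x hx
    exact pd_congr hV IH hx k

lemma pd_analytic {d : ℕ} {U : Set (Fin d → ℂ)} {f : (Fin d → ℂ) → ℂ}
    (hf : AnalyticOnNhd ℂ f U) (i : Fin d) : AnalyticOnNhd ℂ (pd i f) U := by
  have h1 := hf.fderiv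
  exact (ContinuousLinearMap.apply ℂ ℂ (Pi.single i 1)).comp_analyticOnNhd h1

lemma iterPD_analytic {d : ℕ} {U : Set (Fin d → ℂ)} {f : (Fin d → ℂ) → ℂ}
    (hf : AnalyticOnNhd ℂ f U) (l : List (Fin d)) : AnalyticOnNhd ℂ (iterPD l f) U := by
  induction l with
  | nil => exact hf
  | cons k l IH => exact pd_analytic IH k


lemma pd_add {d : ℕ} {f g : (Fin d → ℂ) → ℂ} {x : Fin d → ℂ}
    (hf : DifferentiableAt ℂ f x) (hg : DifferentiableAt ℂ g x) (i : Fin d) :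
    pd i (fun y => f y + g y) x = pd i f x + pd i g x := by
  unfold pd
  rw [fderiv_fun_add hf hg, ContinuousLinearMap.add_apply]

lemma pd_const_mul {d : ℕ} {f : (Fin d → ℂ) → ℂ} {x : Fin d → ℂ}
    (hf : DifferentiableAt ℂ f x) (c : ℂ) (i : Fin d) :
    pd i (fun y => c * f y) x = c * pd i f x := by
  unfold pd
  rw [fderiv_const_mul hf c, ContinuousLinearMap.smul_apply, smul_eq_mul]

lemma pd_sum {d : ℕ} {ι : Type*} {s : Finset ι} {F : ι → (Fin d → ℂ) → ℂ} {x : Fin d → ℂ}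
    (hF : ∀ i ∈ s, DifferentiableAt ℂ (F i) x) (k : Fin d) :
    pd k (fun y => ∑ i ∈ s, F i y) x = ∑ i ∈ s, pd k (F i) x := by
  unfold pd
  rw [fderiv_fun_sum hF, ContinuousLinearMap.sum_apply]

lemma pd_const {d : ℕ} (c : ℂ) (x : Fin d → ℂ) (i : Fin d) :
    pd i (fun _ => c) x = 0 := by
  unfold pd
  rw [fderiv_fun_const]
  simp

lemma pd_coord {d : ℕ} (i k : Fin d) (x : Fin d → ℂ) :
    pd k (fun y => y i) x = if i = k then 1 else 0 := by
  unfold pd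
  have : fderiv ℂ (fun y : Fin d → ℂ => y i) x = ContinuousLinearMap.proj i :=
    (ContinuousLinearMap.proj i : (Fin d → ℂ) →L[ℂ] ℂ).fderiv
  rw [this]
  simp [Pi.single_apply]

lemma pd_coord_mul {d : ℕ} {f : (Fin d → ℂ) → ℂ} {x : Fin d → ℂ}
    (hf : DifferentiableAt ℂ f x) (i k : Fin d) :
    pd k (fun y => y i * f y) x
      = (if i = k then 1 else 0) * f x + x i * pd k f x := by
  unfold pd
  have hc : DifferentiableAt ℂ (fun y : Fin d → ℂ => y i) x :=
    (ContinuousLinearMap.proj i : (Fin d → ℂ) →L[ℂ] ℂ).differentiableAt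
  rw [fderiv_fun_mul hc hf]
  rw [ContinuousLinearMap.add_apply, ContinuousLinearMap.smul_apply,
    ContinuousLinearMap.smul_apply]
  have h2 : fderiv ℂ (fun y : Fin d → ℂ => y i) x = ContinuousLinearMap.proj i :=
    (ContinuousLinearMap.proj i : (Fin d → ℂ) →L[ℂ] ℂ).fderiv
  rw [h2]
  simp [Pi.single_apply, smul_eq_mul]
  ring

section IterLemmas
variable {d : ℕ} {U : Set (Fin d → ℂ)}

lemma iterPD_const_mul (hU : IsOpen U) {f : (Fin d → ℂ) → ℂ} (hf : AnalyticOnNhd ℂ f U) (c : ℂ)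
    (l : List (Fin d)) : ∀ x ∈ U, iterPD l (fun y => c * f y) x = c * iterPD l f x := by
  induction l with
  | nil => intro x _; rfl
  | cons k l IH =>
    intro x hx
    rw [iterPD_cons, iterPD_cons]
    rw [pd_congr hU IH hx k]
    exact pd_const_mul ((iterPD_analytic hf l x hx).differentiableAt) c k

lemma iterPD_sum (hU : IsOpen U) {ι : Type*} {s : Finset ι} {F : ι → (Fin d → ℂ) → ℂ}
    (hF : ∀ i ∈ s, AnalyticOnNhd ℂ (F i) U) (l : List (Fin d)) :
    ∀ x ∈ U, iterPD l (fun y => ∑ i ∈ s, F i y) x = ∑ i ∈ s, iterPD l (F i) x := by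
  induction l with
  | nil => intro x _; rfl
  | cons k l IH =>
    intro x hx
    rw [iterPD_cons]
    rw [pd_congr hU IH hx k]
    rw [pd_sum (fun i hi => (iterPD_analytic (hF i hi) l x hx).differentiableAt) k]
    rfl

lemma iterPD_add (hU : IsOpen U) {f g : (Fin d → ℂ) → ℂ} (hf : AnalyticOnNhd ℂ f U)
    (hg : AnalyticOnNhd ℂ g U) (l : List (Fin d)) :
    ∀ x ∈ U, iterPD l (fun y => f y + g y) x = iterPD l f x + iterPD l g x := by
  induction l with
  | nil => intro x _; rfl
  | cons k l IH =>
    intro x hx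
    rw [iterPD_cons]
    rw [pd_congr hU IH hx k]
    rw [pd_add ((iterPD_analytic hf l x hx).differentiableAt)
      ((iterPD_analytic hg l x hx).differentiableAt) k]
    rfl

lemma iterPD_leibniz (hU : IsOpen U) {f : (Fin d → ℂ) → ℂ} (hf : AnalyticOnNhd ℂ f U) (i : Fin d)
    (l : List (Fin d)) :
    ∀ x ∈ U, iterPD l (fun y => y i * f y) x
      = x i * iterPD l f x
        + ∑ h : Fin l.length,
            (if l.get h = i then iterPD (l.eraseIdx (h : ℕ)) f x else 0) := by
  induction l with
  | nil => intro x _; simp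
  | cons k l IH =>
    intro x hx
    rw [iterPD_cons]
    rw [pd_congr hU IH hx k]
    have hdiff1 : DifferentiableAt ℂ (fun y => y i * iterPD l f y) x := by
      exact ((ContinuousLinearMap.proj i : (Fin d → ℂ) →L[ℂ] ℂ).differentiableAt).mul
        ((iterPD_analytic hf l x hx).differentiableAt)
    have hdiff2 : ∀ h : Fin l.length, DifferentiableAt ℂ
        (fun y => if l.get h = i then iterPD (l.eraseIdx (h : ℕ)) f y else 0) x := by
      intro h
      by_cases hli : l.get h = i
      · simp only [if_pos hli]
        exact (iterPD_analytic hf _ x hx).differentiableAt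
      · simp only [if_neg hli]
        exact differentiableAt_const 0
    rw [pd_add hdiff1 (DifferentiableAt.fun_sum (fun h _ => hdiff2 h)) k]
    rw [pd_coord_mul ((iterPD_analytic hf l x hx).differentiableAt) i k]
    rw [pd_sum (fun h _ => hdiff2 h) k]
    have hterm : ∀ h : Fin l.length,
        pd k (fun y => if l.get h = i then iterPD (l.eraseIdx (h:ℕ)) f y else 0) x
          = if l.get h = i then pd k (iterPD (l.eraseIdx (h:ℕ)) f) x else 0 := by
      intro h
      by_cases hli : l.get h = i
      · simp only [if_pos hli]
      · simp only [if_neg hli]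
        exact pd_const 0 x k
    simp only [hterm]
    show _ = x i * iterPD (k :: l) f x + ∑ h : Fin (l.length + 1),
      if (k :: l).get h = i then iterPD ((k :: l).eraseIdx (h : ℕ)) f x else 0
    rw [Fin.sum_univ_succ]
    simp only [List.get_cons_succ, Fin.val_succ, Fin.val_zero, List.eraseIdx_cons_succ,
      List.eraseIdx_cons_zero, iterPD_cons, List.get_cons_zero]
    have hgetsucc : ∀ h : Fin l.length, (k :: l).get h.succ = l.get h := fun h => rfl
    simp only [hgetsucc]
    by_cases hki : k = i
    · simp only [if_pos hki, hki, if_pos rfl, if_true]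
      ring
    · have hik : ¬ (i = k) := fun h => hki h.symm
      simp only [if_neg hki, if_neg hik, hki, if_false, add_zero]
      ring
end IterLemmas

lemma sum_map_eraseIdx {d : ℕ} (γ : Fin d → ℂ) :
    ∀ (l : List (Fin d)) (h : Fin l.length),
      (((l.eraseIdx (h : ℕ)).map γ).sum : ℂ) = (l.map γ).sum - γ (l.get h) := by
  intro l
  induction l with
  | nil => intro h; exact absurd h.2 (by simp)
  | cons k l IH =>
    intro h
    induction h using Fin.cases with
    | zero => simp
    | succ h =>
      simp only [Fin.val_succ, List.eraseIdx_cons_succ, List.map_cons, List.sum_cons,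
        IH h]
      rw [show (k :: l).get h.succ = l.get h from rfl]
      ring

lemma sum_univ_get {d : ℕ} (γ : Fin d → ℂ) (l : List (Fin d)) :
    ∑ h : Fin l.length, γ (l.get h) = (l.map γ).sum := by
  conv_rhs => rw [← List.ofFn_get l]
  rw [List.map_ofFn, List.sum_ofFn]
  rfl

theorem stmt1 (d : ℕ) (hd : 1 ≤ d) (γ : Fin d → ℂ) (b β A : ℂ)
    (hb : b ≠ 0) (hβ : β ≠ 0)
    (hA : 1 + b * Complex.exp (β * A) = 0)
    (U : Set (Fin d → ℂ)) (hU : IsOpen U) (hU0 : (0 : Fin d → ℂ) ∈ U)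
    (ψ : (Fin d → ℂ) → ℂ) (hψ : AnalyticOn ℂ ψ U) (hψ0 : ψ 0 = A)
    (heq : ∀ a ∈ U, 1 + b * Complex.exp (β * ψ a)
      + ∑ i, a i * Complex.exp (γ i * ψ a) = 0)
    (N : ℕ) (hN : 1 ≤ N) (I : Fin N → Fin d) :
    iterPDList I (fun a => Complex.exp (ψ a)) 0 =
      -(Complex.exp (A * (1 + ∑ h, (γ (I h) - 1))) /
          (b * β * Complex.exp (A * (β - 1))) ^ N) *
        (-β) ^ (N - 1) *
        fallC (β⁻¹ - 1 + β⁻¹ * ∑ h, γ (I h)) (N - 1) := by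
  have hψa : AnalyticOnNhd ℂ ψ U := (hU.analyticOn_iff_analyticOnNhd).mp hψ
  have hE : ∀ c : ℂ, AnalyticOnNhd ℂ (fun y => cexp (c * ψ y)) U :=
    fun c => (analyticOnNhd_const.mul hψa).cexp
  have hpdψ : ∀ j : Fin d, AnalyticOnNhd ℂ (pd j ψ) U := fun j => pd_analytic hψa j
  have hT : ∀ (c : ℂ) (j : Fin d),
      AnalyticOnNhd ℂ (fun y => cexp (c * ψ y) * pd j ψ y) U :=
    fun c j => (hE c).mul (hpdψ j)
  have hψd : ∀ a ∈ U, DifferentiableAt ℂ ψ a := fun a ha => (hψa a ha).differentiableAt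
  -- derivative of exp(c ψ)
  have hpdE : ∀ (c : ℂ) (j : Fin d), ∀ a ∈ U,
      pd j (fun y => cexp (c * ψ y)) a = c * (cexp (c * ψ a) * pd j ψ a) := by
    intro c j a ha
    have h1 : HasFDerivAt (fun y => cexp (c * ψ y))
        (cexp (c * ψ a) • (c • fderiv ℂ ψ a)) a :=
      (((hψd a ha).hasFDerivAt).const_mul c).cexp
    show fderiv ℂ (fun y => cexp (c * ψ y)) a (Pi.single j 1) = _
    rw [h1.fderiv]
    simp only [ContinuousLinearMap.smul_apply, smul_eq_mul]
    rw [show pd j ψ a = fderiv ℂ ψ a (Pi.single j 1) from rfl]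
    ring
  have hPDE : ∀ a ∈ U, ∀ j : Fin d,
      b * β * cexp (β * ψ a) * pd j ψ a + cexp (γ j * ψ a)
        + ∑ i, a i * (γ i * cexp (γ i * ψ a) * pd j ψ a) = 0 := by
    intro a ha j
    have hDψ := (hψd a ha).hasFDerivAt
    have h1 : HasFDerivAt (fun y => 1 + b * cexp (β * ψ y))
        (b • (cexp (β * ψ a) • (β • fderiv ℂ ψ a))) a :=
      (((hDψ.const_mul β).cexp).const_mul b).const_add 1
    have h2 : ∀ i : Fin d, HasFDerivAt (fun y : Fin d → ℂ => y i * cexp (γ i * ψ y))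
        (a i • (cexp (γ i * ψ a) • (γ i • fderiv ℂ ψ a))
          + cexp (γ i * ψ a) • (ContinuousLinearMap.proj i : (Fin d → ℂ) →L[ℂ] ℂ)) a :=
      fun i => ((ContinuousLinearMap.proj i :
        (Fin d → ℂ) →L[ℂ] ℂ).hasFDerivAt).mul ((hDψ.const_mul (γ i)).cexp)
    have h3 : HasFDerivAt (fun y : Fin d → ℂ => ∑ i, y i * cexp (γ i * ψ y))
        (∑ i, (a i • (cexp (γ i * ψ a) • (γ i • fderiv ℂ ψ a))
          + cexp (γ i * ψ a) • (ContinuousLinearMap.proj i : (Fin d → ℂ) →L[ℂ] ℂ))) a :=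
      HasFDerivAt.fun_sum (fun i _ => h2 i)
    have h4 : HasFDerivAt
        (fun y : Fin d → ℂ => 1 + b * cexp (β * ψ y) + ∑ i, y i * cexp (γ i * ψ y))
        ((b • (cexp (β * ψ a) • (β • fderiv ℂ ψ a)))
          + ∑ i, (a i • (cexp (γ i * ψ a) • (γ i • fderiv ℂ ψ a))
          + cexp (γ i * ψ a) • (ContinuousLinearMap.proj i : (Fin d → ℂ) →L[ℂ] ℂ))) a :=
      h1.add h3
    have h5 : fderiv ℂ
        (fun y : Fin d → ℂ => 1 + b * cexp (β * ψ y) + ∑ i, y i * cexp (γ i * ψ y)) a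
        = 0 := by
      have heqv : (fun y : Fin d → ℂ =>
          1 + b * cexp (β * ψ y) + ∑ i, y i * cexp (γ i * ψ y))
          =ᶠ[nhds a] (fun _ => (0 : ℂ)) :=
        Filter.eventuallyEq_of_mem (hU.mem_nhds ha) heq
      rw [heqv.fderiv_eq]
      exact fderiv_const_apply 0
    have h6 := h4.fderiv
    rw [h5] at h6
    have h7 := congrArg (fun (L : (Fin d → ℂ) →L[ℂ] ℂ) => L (Pi.single j 1)) h6
    simp only [ContinuousLinearMap.zero_apply, ContinuousLinearMap.add_apply,
      ContinuousLinearMap.smul_apply, ContinuousLinearMap.sum_apply,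
      ContinuousLinearMap.proj_apply, smul_eq_mul, Pi.single_apply,
      mul_ite, mul_one, mul_zero, Finset.sum_add_distrib, Finset.sum_ite_eq',
      Finset.mem_univ, if_true] at h7
    rw [show (fderiv ℂ ψ a) (Pi.single j 1) = pd j ψ a from rfl] at h7
    have hsc : ∀ i : Fin d, a i * (cexp (γ i * ψ a) * (γ i * pd j ψ a))
        = a i * (γ i * cexp (γ i * ψ a) * pd j ψ a) := fun i => by ring
    rw [Finset.sum_congr rfl (fun i _ => hsc i)] at h7
    linear_combination -h7
  have hstar0 : ∀ j : Fin d, ∀ a ∈ U,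
      β * pd j ψ a = cexp (γ j * ψ a)
        + ∑ i, a i * ((γ i - β) * (cexp (γ i * ψ a) * pd j ψ a)) := by
    intro j a ha
    have hsum : ∑ i, a i * ((γ i - β) * (cexp (γ i * ψ a) * pd j ψ a))
        = (∑ i, a i * (γ i * cexp (γ i * ψ a) * pd j ψ a))
          - (∑ i, a i * cexp (γ i * ψ a)) * (β * pd j ψ a) := by
      rw [Finset.sum_mul, ← Finset.sum_sub_distrib]
      exact Finset.sum_congr rfl (fun i _ => by ring)
    rw [hsum]
    linear_combination (β * pd j ψ a) * (heq a ha) - hPDE a ha j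
  have hstar : ∀ (x : ℂ) (j : Fin d), ∀ a ∈ U,
      cexp (x * ψ a) * pd j ψ a
        = β⁻¹ * (cexp ((x + γ j) * ψ a)
            + ∑ i, a i * ((γ i - β) * (cexp ((x + γ i) * ψ a) * pd j ψ a))) := by
    intro x j a ha
    have hsplit : ∀ c : ℂ, cexp ((x + c) * ψ a) = cexp (x * ψ a) * cexp (c * ψ a) :=
      fun c => by rw [add_mul, Complex.exp_add]
    simp only [hsplit]
    have hsum : ∑ i, a i * ((γ i - β) * (cexp (x * ψ a) * cexp (γ i * ψ a) * pd j ψ a))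
        = cexp (x * ψ a) * ∑ i, a i * ((γ i - β) * (cexp (γ i * ψ a) * pd j ψ a)) := by
      rw [Finset.mul_sum]
      exact Finset.sum_congr rfl (fun i _ => by ring)
    rw [hsum]
    rw [← mul_add, ← hstar0 j a ha, show β⁻¹ * (cexp (x * ψ a) * (β * pd j ψ a)) = (β⁻¹ * β) * (cexp (x * ψ a) * pd j ψ a) by ring, inv_mul_cancel₀ hβ, one_mul]
  have main : ∀ (n : ℕ) (l : List (Fin d)), l.length = n → ∀ (x : ℂ) (j : Fin d),
      iterPD l (fun y => cexp (x * ψ y) * pd j ψ y) 0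
        = (β⁻¹) ^ (n + 1) * cexp (A * (x + γ j + (l.map γ).sum))
            * ∏ i ∈ Finset.range n, (x + γ j + (l.map γ).sum - ((i : ℂ) + 1) * β) := by
    intro n
    induction n with
    | zero =>
      intro l hl x j
      rw [List.length_eq_zero_iff] at hl
      subst hl
      have h := hstar x j 0 hU0
      simp only [Pi.zero_apply, zero_mul, Finset.sum_const_zero, add_zero] at h
      rw [hψ0] at h
      simp only [iterPD_nil, List.map_nil, List.sum_nil, Finset.range_zero,
        Finset.prod_empty]
      rw [hψ0, h]
      rw [show A * (x + γ j + 0) = (x + γ j) * A by ring]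
      ring
    | succ n IH =>
      intro l hl x j
      obtain ⟨L, k, rfl⟩ : ∃ L k, l = L ++ [k] := by
        rcases List.eq_nil_or_concat l with h | ⟨L, k, h⟩
        · subst h; simp at hl
        · exact ⟨L, k, by rw [h, List.concat_eq_append]⟩
      have hL : L.length = n := by
        simp only [List.length_append, List.length_cons, List.length_nil] at hl
        omega
      -- the E-lemma at length n+1
      have hElem : ∀ z : ℂ, iterPD (L ++ [k]) (fun y => cexp (z * ψ y)) 0
          = z * ((β⁻¹) ^ (n + 1) * cexp (A * (z + ((L ++ [k]).map γ).sum))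
              * ∏ i ∈ Finset.range n, (z + ((L ++ [k]).map γ).sum - ((i : ℂ) + 1) * β)) := by
        intro z
        rw [iterPD_append_singleton]
        rw [iterPD_congr hU (fun y hy => hpdE z k y hy) L 0 hU0]
        rw [iterPD_const_mul hU (hT z k) z L 0 hU0]
        rw [IH L hL z k]
        have hsum : ((L ++ [k]).map γ).sum = (L.map γ).sum + γ k := by
          simp
        rw [hsum]
        have hprod : ∏ i ∈ Finset.range n, (z + γ k + (L.map γ).sum - ((i : ℂ) + 1) * β)
            = ∏ i ∈ Finset.range n, (z + ((L.map γ).sum + γ k) - ((i : ℂ) + 1) * β) :=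
          Finset.prod_congr rfl (fun i _ => by ring)
        rw [hprod, show A * (z + γ k + (L.map γ).sum) = A * (z + ((L.map γ).sum + γ k)) by ring]
      rw [iterPD_congr hU (fun y hy => hstar x j y hy) (L ++ [k]) 0 hU0]
      have hg : ∀ i : Fin d, AnalyticOnNhd ℂ
          (fun y => (γ i - β) * (cexp ((x + γ i) * ψ y) * pd j ψ y)) U :=
        fun i => analyticOnNhd_const.mul (hT (x + γ i) j)
      have hF2 : ∀ i : Fin d, AnalyticOnNhd ℂ
          (fun y => y i * ((γ i - β) * (cexp ((x + γ i) * ψ y) * pd j ψ y))) U :=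
        fun i => ((ContinuousLinearMap.proj i :
          (Fin d → ℂ) →L[ℂ] ℂ).analyticOnNhd U).mul (hg i)
      have hsumA : AnalyticOnNhd ℂ
          (fun y => ∑ i, y i * ((γ i - β) * (cexp ((x + γ i) * ψ y) * pd j ψ y))) U :=
        Finset.analyticOnNhd_fun_sum Finset.univ (fun i _ => hF2 i)
      have hinner : AnalyticOnNhd ℂ
          (fun y => cexp ((x + γ j) * ψ y)
            + ∑ i, y i * ((γ i - β) * (cexp ((x + γ i) * ψ y) * pd j ψ y))) U := by
        exact (hE (x + γ j)).add hsumA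
      rw [iterPD_const_mul hU hinner β⁻¹ (L ++ [k]) 0 hU0]
      rw [iterPD_add hU (hE (x + γ j)) hsumA (L ++ [k]) 0 hU0]
      rw [hElem (x + γ j)]
      rw [iterPD_sum hU (fun i _ => hF2 i) (L ++ [k]) 0 hU0]
      have hterm : ∀ i : Fin d,
          iterPD (L ++ [k])
            (fun y => y i * ((γ i - β) * (cexp ((x + γ i) * ψ y) * pd j ψ y))) 0
            = ∑ h : Fin (L ++ [k]).length,
                if (L ++ [k]).get h = i then
                  (γ i - β) * ((β⁻¹) ^ (n + 1)
                    * cexp (A * (x + γ j + ((L ++ [k]).map γ).sum))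
                    * ∏ i' ∈ Finset.range n,
                        (x + γ j + ((L ++ [k]).map γ).sum - ((i' : ℂ) + 1) * β))
                else 0 := by
        intro i
        rw [iterPD_leibniz hU (hg i) i (L ++ [k]) 0 hU0]
        simp only [Pi.zero_apply, zero_mul, zero_add]
        refine Finset.sum_congr rfl (fun h _ => ?_)
        by_cases hli : (L ++ [k]).get h = i
        · rw [if_pos hli, if_pos hli]
          have hlth : ((h : ℕ)) < (L ++ [k]).length := h.2
          have hlen' : ((L ++ [k]).eraseIdx (h : ℕ)).length = n := by
            rw [List.length_eraseIdx_of_lt hlth, hl]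
            omega
          rw [iterPD_const_mul hU (hT (x + γ i) j) (γ i - β)
            ((L ++ [k]).eraseIdx (h : ℕ)) 0 hU0]
          rw [IH _ hlen' (x + γ i) j]
          rw [sum_map_eraseIdx γ (L ++ [k]) h, hli]
          rw [show x + γ i + γ j + (((L ++ [k]).map γ).sum - γ i)
              = x + γ j + ((L ++ [k]).map γ).sum by ring]
        · rw [if_neg hli, if_neg hli]
      rw [Finset.sum_congr rfl (fun i _ => hterm i)]
      rw [Finset.sum_comm]
      have hcollapse : ∀ h : Fin (L ++ [k]).length,
          (∑ i : Fin d, if (L ++ [k]).get h = i then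
            (γ i - β) * ((β⁻¹) ^ (n + 1)
              * cexp (A * (x + γ j + ((L ++ [k]).map γ).sum))
              * ∏ i' ∈ Finset.range n,
                  (x + γ j + ((L ++ [k]).map γ).sum - ((i' : ℂ) + 1) * β))
            else 0)
          = (γ ((L ++ [k]).get h) - β) * ((β⁻¹) ^ (n + 1)
              * cexp (A * (x + γ j + ((L ++ [k]).map γ).sum))
              * ∏ i' ∈ Finset.range n,
                  (x + γ j + ((L ++ [k]).map γ).sum - ((i' : ℂ) + 1) * β)) := by
        intro h
        rw [Finset.sum_ite_eq]
        exact if_pos (Finset.mem_univ _)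
      rw [Finset.sum_congr rfl (fun h _ => hcollapse h)]
      rw [← Finset.sum_mul]
      rw [Finset.sum_sub_distrib, Finset.sum_const, sum_univ_get γ (L ++ [k])]
      rw [Finset.card_univ]
      rw [show Fintype.card (Fin (L ++ [k]).length) • β = ((n : ℂ) + 1) * β by
        rw [Fintype.card_fin, hl, nsmul_eq_mul]; push_cast; ring]
      rw [Finset.prod_range_succ]
      ring
  -- evaluation lemma for pure exponentials
  have hEval : ∀ (m : ℕ) (l : List (Fin d)), l.length = m + 1 → ∀ z : ℂ,
      iterPD l (fun y => cexp (z * ψ y)) 0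
        = z * ((β⁻¹) ^ (m + 1) * cexp (A * (z + (l.map γ).sum))
            * ∏ i ∈ Finset.range m, (z + (l.map γ).sum - ((i : ℂ) + 1) * β)) := by
    intro m l hl z
    obtain ⟨L, k, rfl⟩ : ∃ L k, l = L ++ [k] := by
      rcases List.eq_nil_or_concat l with h | ⟨L, k, h⟩
      · subst h; simp at hl
      · exact ⟨L, k, by rw [h, List.concat_eq_append]⟩
    have hL : L.length = m := by
      simp only [List.length_append, List.length_cons, List.length_nil] at hl
      omega
    rw [iterPD_append_singleton]
    rw [iterPD_congr hU (fun y hy => hpdE z k y hy) L 0 hU0]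
    rw [iterPD_const_mul hU (hT z k) z L 0 hU0]
    rw [main m L hL z k]
    have hsum : ((L ++ [k]).map γ).sum = (L.map γ).sum + γ k := by simp
    rw [hsum]
    have hprod : ∏ i ∈ Finset.range m, (z + γ k + (L.map γ).sum - ((i : ℂ) + 1) * β)
        = ∏ i ∈ Finset.range m, (z + ((L.map γ).sum + γ k) - ((i : ℂ) + 1) * β) :=
      Finset.prod_congr rfl (fun i _ => by ring)
    rw [hprod, show A * (z + γ k + (L.map γ).sum) = A * (z + ((L.map γ).sum + γ k)) by ring]
  -- final assembly
  obtain ⟨n, rfl⟩ : ∃ n, N = n + 1 := ⟨N - 1, by omega⟩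
  have hfn : (fun a : Fin d → ℂ => cexp (ψ a)) = fun a => cexp ((1 : ℂ) * ψ a) := by
    funext a; rw [one_mul]
  show iterPD (List.ofFn I) (fun a => cexp (ψ a)) 0 = _
  rw [hfn]
  rw [hEval n (List.ofFn I) (by simp) 1]
  have hS : ((List.ofFn I).map γ).sum = ∑ h, γ (I h) := by
    rw [List.map_ofFn, List.sum_ofFn]
    rfl
  rw [hS]
  rw [show (n + 1 - 1) = n from rfl]
  unfold fallC
  have hs1 : ∑ h : Fin (n + 1), (γ (I h) - 1) = (∑ h, γ (I h)) - ((n : ℂ) + 1) := by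
    rw [Finset.sum_sub_distrib, Finset.sum_const, Finset.card_univ, Fintype.card_fin,
      nsmul_eq_mul]
    push_cast; ring
  rw [hs1]
  have hbb : b * β * cexp (A * (β - 1)) = -β * cexp (-A) := by
    rw [show A * (β - 1) = β * A + -A by ring, Complex.exp_add]
    linear_combination β * cexp (-A) * hA
  rw [hbb]
  have hexpN : cexp (A * (1 + ((∑ h, γ (I h)) - ((n : ℂ) + 1))))
      = cexp (A * (1 + ∑ h, γ (I h))) * cexp (-A) ^ (n + 1) := by
    rw [← Complex.exp_nat_mul, ← Complex.exp_add]
    congr 1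
    push_cast; ring
  rw [hexpN]
  have hfac : ∀ i ∈ Finset.range n, (1 : ℂ) + (∑ h, γ (I h)) - ((i : ℂ) + 1) * β
      = (β⁻¹ - 1 + β⁻¹ * (∑ h, γ (I h)) - (i : ℂ)) * β := by
    intro i _
    field_simp
    ring
  rw [Finset.prod_congr rfl hfac, Finset.prod_mul_distrib, Finset.prod_const]
  have hE2 : cexp (-A) ≠ 0 := Complex.exp_ne_zero _
  have hnb : (-β) ≠ 0 := neg_ne_zero.mpr hβ
  field_simp
  rw [Finset.card_range]
  have hk2 : (1 / β) ^ (n + 1) * β ^ (n + 1) = 1 := by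
    rw [← mul_pow, one_div, inv_mul_cancel₀ hβ, one_pow]
  linear_combination (-((∏ x ∈ Finset.range n, (1 - β + ∑ h, γ (I h) - β * ↑x) / β)
    * cexp (-A) ^ (n + 1) * β ^ n * (-1) ^ n)) * hk2
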